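/- Let n ≥ 1 and K ≥ 1 be integers, and let n_1, …, n_K be positive integers. Let σ : ℝ → ℝ be convex and nondecreasing (for example, ReLU). Let W_1 ∈ ℝ^{n_1 × n}, W_k ∈ ℝ^{n_k × n_{k−1}} for k = 2,…,K, W_{K+1} ∈ ℝ^{1 × n_K}, D_k ∈ ℝ^{n_k × n} for k = 2,…,K, D_{K+1} ∈ ℝ^{1 × n}, and biases b_k ∈ ℝ^{n_k} for k = 1,…,K and b_{K+1} ∈ ℝ. Define z_1(x) = σ(W_1 x + b_1) (σ applied entrywise), z_k(x) = σ(W_k z_{k−1}(x) + b_k + D_k x) for k = 2,…,K, and φ̃(x) = W_{K+1} z_K(x) + b_{K+1} + D_{K+1} x. If all entries of W_1, …, W_{K+1} are nonnegative and all entries of D_2, …, D_K are nonnegative, then φ̃ : ℝ^n → ℝ is supermodular: for all x, y ∈ ℝ^n, φ̃(x ∨ y) + φ̃(x ∧ y) ≥ φ̃(x) + φ̃(y), where x ∨ y and x ∧ y denote the componentwise maximum and minimum. -/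

import Mathlib

/-- Key scalar lemma: for convex nondecreasing `σ`, if `a ≤ b`, `a ≤ c` and
`b + c ≤ a + d`, then `σ b + σ c ≤ σ a + σ d`. -/
lemma conv_key {σ : ℝ → ℝ} (hc : ConvexOn ℝ Set.univ σ) (hm : Monotone σ)
    {a b c d : ℝ} (hab : a ≤ b) (hac : a ≤ c) (hsum : b + c ≤ a + d) :
    σ b + σ c ≤ σ a + σ d := by
  have hsd : b + c - a ≤ d := by linarith
  have hmain : σ b + σ c ≤ σ a + σ (b + c - a) := by
    set s := b + c - a with hs
    have hbs : b ≤ s := by rw [hs]; linarith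
    have hcs : c ≤ s := by rw [hs]; linarith
    rcases eq_or_lt_of_le (hab.trans hbs) with heq | hlt
    · have hb : b = a := le_antisymm (by rw [hs] at heq; linarith) hab
      have hcc : c = a := by rw [hs] at heq; linarith
      rw [hb, hcc, hs, hb, hcc, show a + a - a = a by ring]
    · set t := (s - b) / (s - a) with ht
      have hne : s - a ≠ 0 := by linarith
      have ht0 : 0 ≤ t := div_nonneg (by linarith) (by linarith)
      have ht1 : t ≤ 1 := (div_le_one (by linarith)).mpr (by linarith)
      have hb : t * a + (1 - t) * s = b := by have key : t * (s - a) = s - b := (by rw [ht]; exact div_mul_cancel₀ _ hne); linear_combination -key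
      have hcc : (1 - t) * a + t * s = c := by
        have : c = a + s - b := by rw [hs]; ring
        have key : t * (s - a) = s - b := (by rw [ht]; exact div_mul_cancel₀ _ hne); rw [this]; linear_combination key
      have h1 := hc.2 (Set.mem_univ a) (Set.mem_univ s) ht0 (by linarith)
        (by ring : t + (1 - t) = 1)
      have h2 := hc.2 (Set.mem_univ a) (Set.mem_univ s) (by linarith) ht0
        (by ring : (1 - t) + t = 1)
      simp only [smul_eq_mul] at h1 h2
      rw [hb] at h1; rw [hcc] at h2
      linarith
  exact hmain.trans (by linarith [hm hsd])

/-- The hidden-layer outputs of a feedforward neural network with input passthrough: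
`hiddenLayer σ d W D b x 0 = x` (the input) and
`hiddenLayer σ d W D b x (k+1) = σ(W_k ⬝ z_k + b_k + D_k ⬝ x)` entrywise.
Here `d k` is the width of layer `k` (with `d 0` the input dimension), `W k` is the weight
matrix from layer `k` to layer `k+1`, `D k` the passthrough matrix from the input to layer
`k+1`, and `b k` the bias of layer `k+1`. -/
noncomputable def hiddenLayer (σ : ℝ → ℝ) (d : ℕ → ℕ)
    (W : ∀ k : ℕ, Matrix (Fin (d (k + 1))) (Fin (d k)) ℝ)
    (D : ∀ k : ℕ, Matrix (Fin (d (k + 1))) (Fin (d 0)) ℝ)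
    (b : ∀ k : ℕ, Fin (d (k + 1)) → ℝ)
    (x : Fin (d 0) → ℝ) : ∀ k : ℕ, Fin (d k) → ℝ
  | 0 => x
  | k + 1 => fun i =>
      σ ((W k).mulVec (hiddenLayer σ d W D b x k) i + b k i + (D k).mulVec x i)

/-- an input supermodular neural network (ISNN): if all the weight matrices
`W_1, …, W_{K+1}` are entrywise nonnegative, the passthrough matrices `D_2, …, D_K` are
entrywise nonnegative, the first layer has no passthrough (`D 0 = 0`), and the activation
`σ` is convex and nondecreasing, then the network output `φ̃` is supermodular on `ℝ^n`.
(In our indexing, the paper's `W_k`, `k = 1, …, K`, is `W (k-1)`; `W_{K+1}` is the output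
row vector `w`; the paper's `D_k`, `k = 2, …, K`, is `D (k-1)`; `D_{K+1}` is `Dout`.) -/
theorem isnn_supermodular (K : ℕ) (hK : 1 ≤ K) (d : ℕ → ℕ)
    (hd0 : 1 ≤ d 0) (hd : ∀ k, 1 ≤ k → k ≤ K → 1 ≤ d k)
    (σ : ℝ → ℝ) (hσ_conv : ConvexOn ℝ Set.univ σ) (hσ_mono : Monotone σ)
    (W : ∀ k : ℕ, Matrix (Fin (d (k + 1))) (Fin (d k)) ℝ)
    (D : ∀ k : ℕ, Matrix (Fin (d (k + 1))) (Fin (d 0)) ℝ)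
    (b : ∀ k : ℕ, Fin (d (k + 1)) → ℝ)
    (w : Fin (d K) → ℝ) (Dout : Fin (d 0) → ℝ) (bout : ℝ)
    (hW : ∀ k, k ≤ K - 1 → ∀ i j, 0 ≤ W k i j)
    (hw : ∀ i, 0 ≤ w i)
    (hD1 : D 0 = 0)
    (hD : ∀ k, 1 ≤ k → k ≤ K - 1 → ∀ i j, 0 ≤ D k i j)
    (φ : (Fin (d 0) → ℝ) → ℝ)
    (hφ : ∀ x, φ x = (∑ i, w i * hiddenLayer σ d W D b x K i) + bout + ∑ j, Dout j * x j) :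
    ∀ x y : Fin (d 0) → ℝ, φ x + φ y ≤ φ (x ⊔ y) + φ (x ⊓ y) := by
  set z := hiddenLayer σ d W D b with hz
  -- monotonicity of each hidden layer
  have mono : ∀ k, k ≤ K → ∀ (a a' : Fin (d 0) → ℝ), (∀ j, a j ≤ a' j) →
      ∀ i, z a k i ≤ z a' k i := by
    intro k
    induction k with
    | zero => intro _ a a' h i; simpa [hz, hiddenLayer] using h i
    | succ k ih =>
      intro hk a a' h i
      simp only [hz, hiddenLayer]
      apply hσ_mono
      have hWk : ∀ i j, 0 ≤ W k i j := hW k (by omega)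
      have h1 : (W k).mulVec (hiddenLayer σ d W D b a k) i ≤
          (W k).mulVec (hiddenLayer σ d W D b a' k) i := by
        simp only [Matrix.mulVec, dotProduct]
        exact Finset.sum_le_sum fun j _ =>
          mul_le_mul_of_nonneg_left (ih (by omega) a a' h j) (hWk i j)
      have h2 : (D k).mulVec a i ≤ (D k).mulVec a' i := by
        rcases Nat.eq_zero_or_pos k with rfl | hkp
        · simp [hD1]
        · simp only [Matrix.mulVec, dotProduct]
          exact Finset.sum_le_sum fun j _ =>
            mul_le_mul_of_nonneg_left (h j) (hD k hkp (by omega) i j)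
      linarith
  intro x y
  have hxy : ∀ j, (x ⊔ y) j + (x ⊓ y) j = x j + y j := fun j => by
    simp [Pi.sup_apply, Pi.inf_apply, max_add_min]
  -- coordinatewise supermodularity of each hidden layer
  have super : ∀ k, k ≤ K → ∀ i,
      z x k i + z y k i ≤ z (x ⊔ y) k i + z (x ⊓ y) k i := by
    intro k
    induction k with
    | zero => intro _ i; simp only [hz, hiddenLayer]; linarith [hxy i]
    | succ k ih =>
      intro hk i
      simp only [hz, hiddenLayer]
      have hWk : ∀ i j, 0 ≤ W k i j := hW k (by omega)
      set A : (Fin (d 0) → ℝ) → ℝ := fun t =>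
        (W k).mulVec (hiddenLayer σ d W D b t k) i + b k i + (D k).mulVec t i with hA
      show σ (A x) + σ (A y) ≤ σ (A (x ⊔ y)) + σ (A (x ⊓ y))
      have hAmono : ∀ t t', (∀ j, t j ≤ t' j) → A t ≤ A t' := by
        intro t t' h
        have h1 : (W k).mulVec (hiddenLayer σ d W D b t k) i ≤
            (W k).mulVec (hiddenLayer σ d W D b t' k) i := by
          simp only [Matrix.mulVec, dotProduct]
          exact Finset.sum_le_sum fun j _ =>
            mul_le_mul_of_nonneg_left (mono k (by omega) t t' h j) (hWk i j)
        have h2 : (D k).mulVec t i ≤ (D k).mulVec t' i := by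
          rcases Nat.eq_zero_or_pos k with rfl | hkp
          · simp [hD1]
          · simp only [Matrix.mulVec, dotProduct]
            exact Finset.sum_le_sum fun j _ =>
              mul_le_mul_of_nonneg_left (h j) (hD k hkp (by omega) i j)
        simp only [hA]; linarith
      have hvx : A (x ⊓ y) ≤ A x := hAmono _ _ fun j => inf_le_left (a := x j)
      have hvy : A (x ⊓ y) ≤ A y := hAmono _ _ fun j => inf_le_right (a := x j)
      have hsum : A x + A y ≤ A (x ⊓ y) + A (x ⊔ y) := by
        have hWsum : (W k).mulVec (hiddenLayer σ d W D b x k) i +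
            (W k).mulVec (hiddenLayer σ d W D b y k) i ≤
            (W k).mulVec (hiddenLayer σ d W D b (x ⊔ y) k) i +
            (W k).mulVec (hiddenLayer σ d W D b (x ⊓ y) k) i := by
          simp only [Matrix.mulVec, dotProduct, ← Finset.sum_add_distrib]
          refine Finset.sum_le_sum fun j _ => ?_
          have h := ih (by omega) j
          simp only [hz] at h
          nlinarith [hWk i j]
        have hDsum : (D k).mulVec x i + (D k).mulVec y i =
            (D k).mulVec (x ⊔ y) i + (D k).mulVec (x ⊓ y) i := by
          simp only [Matrix.mulVec, dotProduct, ← Finset.sum_add_distrib]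
          refine Finset.sum_congr rfl fun j _ => ?_
          rw [← mul_add, ← mul_add, hxy j]
        simp only [hA]; linarith
      have := conv_key hσ_conv hσ_mono (d := A (x ⊔ y)) hvx hvy (by linarith)
      linarith
  rw [hφ x, hφ y, hφ (x ⊔ y), hφ (x ⊓ y)]
  have h1 : (∑ i, w i * z x K i) + (∑ i, w i * z y K i) ≤
      (∑ i, w i * z (x ⊔ y) K i) + (∑ i, w i * z (x ⊓ y) K i) := by
    simp only [← Finset.sum_add_distrib]
    refine Finset.sum_le_sum fun i _ => ?_
    have h := super K le_rfl i
    nlinarith [hw i]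
  have h2 : (∑ j, Dout j * x j) + (∑ j, Dout j * y j) =
      (∑ j, Dout j * (x ⊔ y) j) + (∑ j, Dout j * (x ⊓ y) j) := by
    simp only [← Finset.sum_add_distrib]
    exact Finset.sum_congr rfl fun j _ => by rw [← mul_add, ← mul_add, hxy j]
  simp only [hz] at h1
  linarith
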